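/- For every real number q with 0<q<1, every integer n≥1 and every λ∈ℂ with |λ|=1, there exist bounded operators Y_1,…,Y_{n+1} on the Hilbert space ℓ²(ℕⁿ) acting on the canonical orthonormal basis by the formulas of π_λ, and these operators form a Σ_q-family, i.e., they satisfy relations (R1)–(R5). -/

import Mathlib

open ContinuousLinearMap

noncomputable section

abbrev lpH (n : ℕ) : Type := lp (fun _ : Fin n → ℕ => ℂ) 2

def basisE {n : ℕ} (k : Fin n → ℕ) : lpH n := lp.single 2 k 1

/-- A `Σ_q`-family: relations (R1)-(R5). Index `i : Fin (n+1)` corresponds to `Y_{i+1}`. -/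
def IsSigmaQFamily (q : ℝ) {n : ℕ} {H : Type*} [NormedAddCommGroup H]
    [InnerProductSpace ℂ H] [CompleteSpace H]
    (Y : Fin (n + 1) → H →L[ℂ] H) : Prop :=
  (∀ i j : Fin (n + 1), j < i → ¬((i : ℕ) = n ∧ (j : ℕ) + 1 = n) →
      Y i * Y j = ((q : ℂ))⁻¹ • (Y j * Y i) ∧
      adjoint (Y i) * Y j = ((q : ℂ))⁻¹ • (Y j * adjoint (Y i))) ∧
  (∀ j : Fin (n + 1), (j : ℕ) + 1 = n →
      Y (Fin.last n) * Y j = (((q : ℂ))⁻¹ ^ 2) • (Y j * Y (Fin.last n)) ∧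
      adjoint (Y (Fin.last n)) * Y j = (((q : ℂ))⁻¹ ^ 2) • (Y j * adjoint (Y (Fin.last n)))) ∧
  (∀ i : Fin (n + 1), (i : ℕ) + 1 ≠ n →
      Y i * adjoint (Y i) - adjoint (Y i) * Y i
        = ((1 - q ^ 2 : ℝ) : ℂ) • ∑ k ∈ Finset.Ioi i, adjoint (Y k) * Y k) ∧
  (∀ i : Fin (n + 1), (i : ℕ) + 1 = n →
      Y i * adjoint (Y i) - adjoint (Y i) * Y i
        = ((1 - q ^ 4 : ℝ) : ℂ) • (adjoint (Y (Fin.last n)) * Y (Fin.last n))) ∧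
  (∑ i, adjoint (Y i) * Y i = 1)

/-- The representation `π_λ` on `ℓ²(ℕⁿ)`, described by its action on the canonical
orthonormal basis. Index `i : Fin n` (via `castSucc`) corresponds to `Y_{i+1}`,
and `Fin.last n` corresponds to `Y_{n+1}`. -/
def IsPiRep (q : ℝ) {n : ℕ} (lam : ℂ) (Y : Fin (n + 1) → lpH n →L[ℂ] lpH n) : Prop :=
  (∀ i : Fin n, (i : ℕ) + 1 < n → ∀ k : Fin n → ℕ,
      Y i.castSucc (basisE k)
        = ((q ^ (∑ j ∈ Finset.Iio i, k j) * Real.sqrt (1 - q ^ (2 * k i)) : ℝ) : ℂ)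
            • basisE (Function.update k i (k i - 1))) ∧
  (∀ i : Fin n, (i : ℕ) + 1 = n → ∀ k : Fin n → ℕ,
      Y i.castSucc (basisE k)
        = ((q ^ (∑ j ∈ Finset.Iio i, k j) * Real.sqrt (1 - q ^ (4 * k i)) : ℝ) : ℂ)
            • basisE (Function.update k i (k i - 1))) ∧
  (∀ k : Fin n → ℕ,
      Y (Fin.last n) (basisE k)
        = (lam * (q : ℂ) ^ (∑ j : Fin n, if (j : ℕ) + 1 = n then 2 * k j else k j))
            • basisE k)

/-- Irreducibility: the only closed invariant subspaces are `⊥` and `⊤`. -/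
def IsIrreducibleFamily {n : ℕ} {H : Type*} [NormedAddCommGroup H]
    [InnerProductSpace ℂ H] [CompleteSpace H]
    (Y : Fin (n + 1) → H →L[ℂ] H) : Prop :=
  ∀ V : Submodule ℂ H, IsClosed (V : Set H) →
    (∀ i : Fin (n + 1), ∀ v ∈ V, Y i v ∈ V ∧ adjoint (Y i) v ∈ V) →
    V = ⊥ ∨ V = ⊤

namespace PiRepAux

open scoped ENNReal ComplexConjugate

variable {n : ℕ}

/-- pointwise formula of a weighted composition operator -/
def opFun (w : (Fin n → ℕ) → ℂ) (σ : (Fin n → ℕ) → (Fin n → ℕ)) (f : lpH n) :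
    (Fin n → ℕ) → ℂ := fun m => w m * f (σ m)

theorem opFun_sum_le (w : (Fin n → ℕ) → ℂ) (σ : (Fin n → ℕ) → (Fin n → ℕ))
    (hw : ∀ m, ‖w m‖ ≤ 1) (hσ : Set.InjOn σ {m | w m ≠ 0}) (f : lpH n)
    (s : Finset (Fin n → ℕ)) :
    ∑ m ∈ s, ‖opFun w σ f m‖ ^ (2 : ℝ≥0∞).toReal ≤ ‖f‖ ^ (2 : ℝ≥0∞).toReal := by
  classical
  haveI := Classical.decEq (Fin n → ℕ)
  have hpr : (0 : ℝ) < (2 : ℝ≥0∞).toReal := by norm_num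
  set t := s.filter (fun m => w m ≠ 0) with ht
  have h1 : ∑ m ∈ s, ‖opFun w σ f m‖ ^ (2 : ℝ≥0∞).toReal
      = ∑ m ∈ t, ‖opFun w σ f m‖ ^ (2 : ℝ≥0∞).toReal := by
    rw [ht]
    refine (Finset.sum_filter_of_ne ?_).symm
    intro m _ hne h0
    apply hne
    simp [opFun, h0, Real.zero_rpow hpr.ne']
  rw [h1]
  have h2 : ∑ m ∈ t, ‖opFun w σ f m‖ ^ (2 : ℝ≥0∞).toReal
      ≤ ∑ m ∈ t, ‖f (σ m)‖ ^ (2 : ℝ≥0∞).toReal := by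
    refine Finset.sum_le_sum (fun m _ => ?_)
    refine Real.rpow_le_rpow (norm_nonneg _) ?_ hpr.le
    calc ‖opFun w σ f m‖ = ‖w m‖ * ‖f (σ m)‖ := norm_mul _ _
    _ ≤ 1 * ‖f (σ m)‖ := by gcongr; exact hw m
    _ = ‖f (σ m)‖ := one_mul _
  refine h2.trans ?_
  have h3 : ∑ m ∈ t, ‖f (σ m)‖ ^ (2 : ℝ≥0∞).toReal
      = ∑ m' ∈ t.image σ, ‖f m'‖ ^ (2 : ℝ≥0∞).toReal := by
    refine (Finset.sum_image (g := σ) (f := fun m' => ‖f m'‖ ^ (2 : ℝ≥0∞).toReal) ?_).symm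
    intro x hx y hy hxy
    exact hσ (by simpa [ht] using (Finset.mem_filter.mp hx).2)
      (by simpa [ht] using (Finset.mem_filter.mp hy).2) hxy
  rw [h3]
  exact lp.sum_rpow_le_norm_rpow hpr f _

theorem memℓp_opFun (w : (Fin n → ℕ) → ℂ) (σ : (Fin n → ℕ) → (Fin n → ℕ))
    (hw : ∀ m, ‖w m‖ ≤ 1) (hσ : Set.InjOn σ {m | w m ≠ 0}) (f : lpH n) :
    Memℓp (opFun w σ f) 2 :=
  memℓp_gen' (opFun_sum_le w σ hw hσ f)

/-- the weighted composition operator -/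
def opCLM (w : (Fin n → ℕ) → ℂ) (σ : (Fin n → ℕ) → (Fin n → ℕ))
    (hw : ∀ m, ‖w m‖ ≤ 1) (hσ : Set.InjOn σ {m | w m ≠ 0}) : lpH n →L[ℂ] lpH n :=
  LinearMap.mkContinuous
    { toFun := fun f => ⟨opFun w σ f, memℓp_opFun w σ hw hσ f⟩
      map_add' := by
        intro f g
        apply lp.ext
        funext m
        simp [opFun, lp.coeFn_add, mul_add]
        rfl
      map_smul' := by
        intro c f
        apply lp.ext
        funext m
        simp [opFun, lp.coeFn_smul]
        ring }
    1
    (by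
      intro f
      rw [one_mul]
      refine lp.norm_le_of_forall_sum_le (by norm_num) (norm_nonneg _) ?_
      intro s
      exact opFun_sum_le w σ hw hσ f s)

theorem opCLM_apply (w : (Fin n → ℕ) → ℂ) (σ : (Fin n → ℕ) → (Fin n → ℕ))
    (hw : ∀ m, ‖w m‖ ≤ 1) (hσ : Set.InjOn σ {m | w m ≠ 0}) (f : lpH n) (m : Fin n → ℕ) :
    (opCLM w σ hw hσ f : (Fin n → ℕ) → ℂ) m = w m * f (σ m) := rfl

theorem basisE_apply (k m : Fin n → ℕ) :
    (basisE k : (Fin n → ℕ) → ℂ) m = if m = k then 1 else 0 := by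
  simp [basisE, lp.single_apply, Pi.single_apply]

/-- two operators agreeing on the canonical basis agree -/
theorem ext_of_basis {T S : lpH n →L[ℂ] lpH n}
    (h : ∀ k, T (basisE k) = S (basisE k)) : T = S := by
  refine ContinuousLinearMap.ext fun f => ?_
  have hs : HasSum (fun k => lp.single 2 k (f k)) f :=
    lp.hasSum_single (by norm_num) f
  have hsingle : ∀ k : Fin n → ℕ, lp.single 2 k (f k) = f k • basisE k := by
    intro k
    apply lp.ext
    funext m
    by_cases hm : m = k
    · subst hm; simp [basisE, lp.coeFn_smul, lp.single_apply_self]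
    · simp [basisE, lp.coeFn_smul, lp.single_apply_ne _ _ _ hm, Pi.single_apply, hm]
  have h1 : HasSum (fun k => T (lp.single 2 k (f k))) (T f) := hs.mapL T
  have h2 : HasSum (fun k => T (lp.single 2 k (f k))) (S f) := by
    refine HasSum.congr_fun (hs.mapL S) fun k => ?_
    rw [hsingle k, map_smul, map_smul, h k]
  exact h1.unique h2

theorem coord_eq_inner (x : lpH n) (l : Fin n → ℕ) :
    (x : (Fin n → ℕ) → ℂ) l = inner ℂ (basisE l) x := by
  rw [basisE, lp.inner_single_left]
  simp

theorem adjoint_eq_of {T S : lpH n →L[ℂ] lpH n}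
    (h : ∀ k l, (S (basisE k) : (Fin n → ℕ) → ℂ) l
        = conj ((T (basisE l) : (Fin n → ℕ) → ℂ) k)) :
    adjoint T = S := by
  refine ext_of_basis fun k => ?_
  apply lp.ext
  funext l
  rw [h k l, coord_eq_inner (adjoint T (basisE k)) l, adjoint_inner_right,
    ← inner_conj_symm, ← coord_eq_inner]

theorem opCLM_single (w : (Fin n → ℕ) → ℂ) (σ : (Fin n → ℕ) → (Fin n → ℕ))
    (hw : ∀ m, ‖w m‖ ≤ 1) (hσ : Set.InjOn σ {m | w m ≠ 0}) (k m₀ : Fin n → ℕ)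
    (h : σ m₀ = k) (hu : ∀ m, σ m = k → m = m₀ ∨ w m = 0) :
    opCLM w σ hw hσ (basisE k) = w m₀ • basisE m₀ := by
  apply lp.ext
  funext m
  rw [lp.coeFn_smul]
  show w m * (basisE k : (Fin n → ℕ) → ℂ) (σ m) = w m₀ • (basisE m₀ : (Fin n → ℕ) → ℂ) m
  rw [basisE_apply, basisE_apply]
  by_cases hm : m = m₀
  · subst hm; simp [h]
  · simp only [hm, if_false, smul_eq_mul, mul_zero]
    by_cases hσm : σ m = k
    · rcases hu m hσm with h' | h'
      · exact absurd h' hm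
      · simp [h']
    · simp [hσm]

theorem opCLM_single_zero (w : (Fin n → ℕ) → ℂ) (σ : (Fin n → ℕ) → (Fin n → ℕ))
    (hw : ∀ m, ‖w m‖ ≤ 1) (hσ : Set.InjOn σ {m | w m ≠ 0}) (k : Fin n → ℕ)
    (h : ∀ m, σ m ≠ k) :
    opCLM w σ hw hσ (basisE k) = 0 := by
  apply lp.ext
  funext m
  show w m * (basisE k : (Fin n → ℕ) → ℂ) (σ m) = _
  rw [basisE_apply]
  simp [h m]

/-! ### Concrete weights -/

section Concrete

variable {n : ℕ}

def cc (n : ℕ) (i : Fin n) : ℕ := if (i : ℕ) + 1 = n then 2 else 1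

def up (i : Fin n) (m : Fin n → ℕ) : Fin n → ℕ := Function.update m i (m i + 1)

def dn (i : Fin n) (m : Fin n → ℕ) : Fin n → ℕ := Function.update m i (m i - 1)

def wA (q : ℝ) (i : Fin n) (m : Fin n → ℕ) : ℂ :=
  ((q ^ (∑ j ∈ Finset.Iio i, m j) * Real.sqrt (1 - q ^ (2 * cc n i * (m i + 1))) : ℝ) : ℂ)

def wZ (q : ℝ) (i : Fin n) (m : Fin n → ℕ) : ℂ :=
  ((q ^ (∑ j ∈ Finset.Iio i, m j) * Real.sqrt (1 - q ^ (2 * cc n i * m i)) : ℝ) : ℂ)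

def Ediag (m : Fin n → ℕ) : ℕ := ∑ j, cc n j * m j

def wD (q : ℝ) (lam : ℂ) (m : Fin n → ℕ) : ℂ := lam * (q : ℂ) ^ Ediag m

def wDs (q : ℝ) (lam : ℂ) (m : Fin n → ℕ) : ℂ := conj lam * (q : ℂ) ^ Ediag m

variable {q : ℝ} {lam : ℂ}

theorem one_sub_pow_nonneg (hq0 : 0 < q) (hq1 : q < 1) (e : ℕ) : 0 ≤ 1 - q ^ e :=
  sub_nonneg.mpr (pow_le_one₀ hq0.le hq1.le)

theorem sqrt_factor_le_one (hq0 : 0 < q) (hq1 : q < 1) (e : ℕ) :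
    Real.sqrt (1 - q ^ e) ≤ 1 := by
  calc Real.sqrt (1 - q ^ e) ≤ Real.sqrt 1 :=
        Real.sqrt_le_sqrt (by nlinarith [pow_nonneg hq0.le e])
  _ = 1 := Real.sqrt_one

theorem norm_wA_le (hq0 : 0 < q) (hq1 : q < 1) (i : Fin n) (m : Fin n → ℕ) :
    ‖wA q i m‖ ≤ 1 := by
  rw [wA, Complex.norm_real, Real.norm_eq_abs, abs_of_nonneg
    (mul_nonneg (pow_nonneg hq0.le _) (Real.sqrt_nonneg _))]
  exact mul_le_one₀ (pow_le_one₀ hq0.le hq1.le) (Real.sqrt_nonneg _)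
    (sqrt_factor_le_one hq0 hq1 _)

theorem norm_wZ_le (hq0 : 0 < q) (hq1 : q < 1) (i : Fin n) (m : Fin n → ℕ) :
    ‖wZ q i m‖ ≤ 1 := by
  rw [wZ, Complex.norm_real, Real.norm_eq_abs, abs_of_nonneg
    (mul_nonneg (pow_nonneg hq0.le _) (Real.sqrt_nonneg _))]
  exact mul_le_one₀ (pow_le_one₀ hq0.le hq1.le) (Real.sqrt_nonneg _)
    (sqrt_factor_le_one hq0 hq1 _)

theorem norm_wD_le (hq0 : 0 < q) (hq1 : q < 1) (hlam : ‖lam‖ = 1) (m : Fin n → ℕ) :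
    ‖wD q lam m‖ ≤ 1 := by
  rw [wD, norm_mul, hlam, one_mul]
  rw [show ((q : ℂ) ^ Ediag m) = ((q ^ Ediag m : ℝ) : ℂ) by push_cast; ring]
  rw [Complex.norm_real, Real.norm_eq_abs, abs_of_nonneg (pow_nonneg hq0.le _)]
  exact pow_le_one₀ hq0.le hq1.le

theorem norm_wDs_le (hq0 : 0 < q) (hq1 : q < 1) (hlam : ‖lam‖ = 1) (m : Fin n → ℕ) :
    ‖wDs q lam m‖ ≤ 1 := by
  have : ‖conj lam‖ = 1 := by rw [RCLike.norm_conj]; exact hlam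
  rw [wDs, norm_mul, this, one_mul]
  rw [show ((q : ℂ) ^ Ediag m) = ((q ^ Ediag m : ℝ) : ℂ) by push_cast; ring]
  rw [Complex.norm_real, Real.norm_eq_abs, abs_of_nonneg (pow_nonneg hq0.le _)]
  exact pow_le_one₀ hq0.le hq1.le

theorem up_injective (i : Fin n) : Function.Injective (up i) := by
  intro a b h
  funext j
  by_cases hj : j = i
  · subst hj
    have := congrFun h j
    simpa [up] using this
  · have := congrFun h j
    simpa [up, Function.update_of_ne hj] using this

theorem wZ_eq_zero (hq0 : 0 < q) (i : Fin n) {m : Fin n → ℕ} (h : m i = 0) :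
    wZ q i m = 0 := by
  simp [wZ, h]

theorem dn_injOn (hq0 : 0 < q) (i : Fin n) :
    Set.InjOn (dn i) {m | wZ q i m ≠ 0} := by
  intro a ha b hb h
  have ha' : a i ≠ 0 := fun h0 => ha (wZ_eq_zero hq0 i h0)
  have hb' : b i ≠ 0 := fun h0 => hb (wZ_eq_zero hq0 i h0)
  funext j
  by_cases hj : j = i
  · subst hj
    have := congrFun h j
    simp only [dn, Function.update_self] at this
    omega
  · have := congrFun h j
    simpa [dn, Function.update_of_ne hj] using this

/-- `Y_i`, `i = 1, …, n` -/
def YA (q : ℝ) (hq0 : 0 < q) (hq1 : q < 1) (i : Fin n) : lpH n →L[ℂ] lpH n :=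
  opCLM (wA q i) (up i) (norm_wA_le hq0 hq1 i) ((up_injective i).injOn)

/-- adjoint of `Y_i` -/
def ZA (q : ℝ) (hq0 : 0 < q) (hq1 : q < 1) (i : Fin n) : lpH n →L[ℂ] lpH n :=
  opCLM (wZ q i) (dn i) (norm_wZ_le hq0 hq1 i) (dn_injOn hq0 i)

/-- `Y_{n+1}` -/
def DD (q : ℝ) (lam : ℂ) (hq0 : 0 < q) (hq1 : q < 1) (hlam : ‖lam‖ = 1) :
    lpH n →L[ℂ] lpH n :=
  opCLM (wD q lam) id (norm_wD_le hq0 hq1 hlam) (Function.injective_id.injOn)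

/-- adjoint of `Y_{n+1}` -/
def DDs (q : ℝ) (lam : ℂ) (hq0 : 0 < q) (hq1 : q < 1) (hlam : ‖lam‖ = 1) :
    lpH n →L[ℂ] lpH n :=
  opCLM (wDs q lam) id (norm_wDs_le hq0 hq1 hlam) (Function.injective_id.injOn)

end Concrete

section Single

variable {n : ℕ} {q : ℝ} {lam : ℂ}

theorem sum_Iio_update_of_lt {i j : Fin n} (h : j < i) (k : Fin n → ℕ) (v : ℕ) :
    ∑ l ∈ Finset.Iio i, Function.update k j v l + k j
      = ∑ l ∈ Finset.Iio i, k l + v := by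
  classical
  have hj : j ∈ Finset.Iio i := Finset.mem_Iio.mpr h
  rw [Finset.sum_update_of_mem hj, Finset.sdiff_singleton_eq_erase,
    ← Finset.sum_erase_add _ k hj]
  omega

theorem sum_Iio_update_of_not_lt {i j : Fin n} (h : ¬ j < i) (k : Fin n → ℕ) (v : ℕ) :
    ∑ l ∈ Finset.Iio i, Function.update k j v l = ∑ l ∈ Finset.Iio i, k l := by
  refine Finset.sum_congr rfl fun l hl => ?_
  have hlj : l ≠ j := by
    intro e; subst e; exact h (Finset.mem_Iio.mp hl)
  exact Function.update_of_ne hlj _ _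

theorem Ediag_update (j : Fin n) (k : Fin n → ℕ) (v : ℕ) :
    Ediag (Function.update k j v) + cc n j * k j = Ediag k + cc n j * v := by
  classical
  unfold Ediag
  rw [← Finset.sum_erase_add _ _ (Finset.mem_univ j),
    ← Finset.sum_erase_add _ (fun l => cc n l * k l) (Finset.mem_univ j)]
  have h1 : ∑ l ∈ Finset.univ.erase j, cc n l * Function.update k j v l
      = ∑ l ∈ Finset.univ.erase j, cc n l * k l :=
    Finset.sum_congr rfl fun l hl => by
      rw [Function.update_of_ne (Finset.mem_erase.mp hl).1]
  rw [h1, Function.update_self]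
  ring

theorem dn_up (i : Fin n) (k : Fin n → ℕ) : dn i (up i k) = k := by
  funext j
  by_cases hj : j = i
  · subst hj; simp [dn, up]
  · simp [dn, up, Function.update_of_ne hj]

theorem up_dn (i : Fin n) {k : Fin n → ℕ} (h : k i ≠ 0) : up i (dn i k) = k := by
  funext j
  by_cases hj : j = i
  · subst hj; simp [dn, up]; omega
  · simp [dn, up, Function.update_of_ne hj]

theorem YA_single (hq0 : 0 < q) (hq1 : q < 1) (i : Fin n) (k : Fin n → ℕ) :
    YA q hq0 hq1 i (basisE k)
      = ((q ^ (∑ j ∈ Finset.Iio i, k j) * Real.sqrt (1 - q ^ (2 * cc n i * k i)) : ℝ) : ℂ)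
          • basisE (Function.update k i (k i - 1)) := by
  classical
  cases hk : k i with
  | zero =>
    have h0 : ∀ m, up i m ≠ k := by
      intro m hm
      have := congrFun hm i
      simp only [up, Function.update_self] at this
      omega
    rw [show YA q hq0 hq1 i = opCLM (wA q i) (up i) (norm_wA_le hq0 hq1 i)
        ((up_injective i).injOn) from rfl,
      opCLM_single_zero _ _ _ _ _ h0]
    simp
  | succ t =>
    have hup : up i (Function.update k i t) = k := by
      funext j
      by_cases hj : j = i
      · subst hj; simp [up, hk]
      · simp [up, Function.update_of_ne hj]
    rw [show YA q hq0 hq1 i = opCLM (wA q i) (up i) (norm_wA_le hq0 hq1 i)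
        ((up_injective i).injOn) from rfl,
      opCLM_single _ _ _ _ k (Function.update k i t) hup
        (fun m hm => Or.inl (up_injective i (hm.trans hup.symm)))]
    rw [show Function.update k i (t + 1 - 1) = Function.update k i t from by norm_num]
    congr 1
    unfold wA
    rw [sum_Iio_update_of_not_lt (lt_irrefl i) k t, Function.update_self]

theorem ZA_single (hq0 : 0 < q) (hq1 : q < 1) (i : Fin n) (k : Fin n → ℕ) :
    ZA q hq0 hq1 i (basisE k)
      = ((q ^ (∑ j ∈ Finset.Iio i, k j)
            * Real.sqrt (1 - q ^ (2 * cc n i * (k i + 1))) : ℝ) : ℂ)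
          • basisE (Function.update k i (k i + 1)) := by
  classical
  have hdn : dn i (Function.update k i (k i + 1)) = k := by
    funext j
    by_cases hj : j = i
    · subst hj; simp [dn]
    · simp [dn, Function.update_of_ne hj]
  have hu : ∀ m, dn i m = k → m = Function.update k i (k i + 1) ∨ wZ q i m = 0 := by
    intro m hm
    by_cases h0 : m i = 0
    · exact Or.inr (wZ_eq_zero hq0 i h0)
    · left
      funext j
      by_cases hj : j = i
      · subst hj
        have := congrFun hm j
        simp only [dn, Function.update_self] at this ⊢
        omega
      · have := congrFun hm j
        simp only [dn, Function.update_of_ne hj] at this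
        simp [Function.update_of_ne hj, this]
  rw [show ZA q hq0 hq1 i = opCLM (wZ q i) (dn i) (norm_wZ_le hq0 hq1 i)
      (dn_injOn hq0 i) from rfl,
    opCLM_single _ _ _ _ k _ hdn hu]
  congr 1
  unfold wZ
  rw [sum_Iio_update_of_not_lt (lt_irrefl i) k (k i + 1), Function.update_self]

theorem DD_single (hq0 : 0 < q) (hq1 : q < 1) (hlam : ‖lam‖ = 1) (k : Fin n → ℕ) :
    DD q lam hq0 hq1 hlam (basisE k) = wD q lam k • basisE k :=
  opCLM_single (wD q lam) id (norm_wD_le hq0 hq1 hlam)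
    (Function.injective_id.injOn) k k rfl (fun m hm => Or.inl hm)

theorem DDs_single (hq0 : 0 < q) (hq1 : q < 1) (hlam : ‖lam‖ = 1) (k : Fin n → ℕ) :
    DDs q lam hq0 hq1 hlam (basisE k) = wDs q lam k • basisE k :=
  opCLM_single (wDs q lam) id (norm_wDs_le hq0 hq1 hlam)
    (Function.injective_id.injOn) k k rfl (fun m hm => Or.inl hm)

theorem wZ_up (i : Fin n) (k : Fin n → ℕ) : wZ q i (up i k) = wA q i k := by
  unfold wZ wA up
  rw [sum_Iio_update_of_not_lt (lt_irrefl i) k (k i + 1), Function.update_self]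

theorem adjoint_YA (hq0 : 0 < q) (hq1 : q < 1) (i : Fin n) :
    adjoint (YA q hq0 hq1 i) = ZA q hq0 hq1 i := by
  refine adjoint_eq_of fun k l => ?_
  rw [show ZA q hq0 hq1 i = opCLM (wZ q i) (dn i) (norm_wZ_le hq0 hq1 i)
      (dn_injOn hq0 i) from rfl,
    show YA q hq0 hq1 i = opCLM (wA q i) (up i) (norm_wA_le hq0 hq1 i)
      ((up_injective i).injOn) from rfl,
    opCLM_apply, opCLM_apply, basisE_apply, basisE_apply]
  by_cases h1 : up i k = l
  · rw [if_pos h1, ← h1, if_pos (dn_up i k), wZ_up]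
    simp [wA, Complex.conj_ofReal]
  · rw [if_neg h1]
    rw [mul_zero, map_zero]
    by_cases h2 : dn i l = k
    · have h0 : l i = 0 := by
        by_contra h0
        exact h1 (by rw [← h2, up_dn i h0])
      rw [wZ_eq_zero hq0 i h0, zero_mul]
    · rw [if_neg h2, mul_zero]

theorem adjoint_DD (hq0 : 0 < q) (hq1 : q < 1) (hlam : ‖lam‖ = 1) :
    adjoint (DD (n := n) q lam hq0 hq1 hlam) = DDs (n := n) q lam hq0 hq1 hlam := by
  refine adjoint_eq_of fun k l => ?_
  rw [show DDs q lam hq0 hq1 hlam = opCLM (wDs q lam) id (norm_wDs_le hq0 hq1 hlam)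
      (Function.injective_id.injOn) from rfl,
    show DD q lam hq0 hq1 hlam = opCLM (wD q lam) id (norm_wD_le hq0 hq1 hlam)
      (Function.injective_id.injOn) from rfl,
    opCLM_apply, opCLM_apply, basisE_apply, basisE_apply]
  by_cases h1 : l = k
  · subst h1
    simp [wD, wDs, map_mul, map_pow, Complex.conj_ofReal]
  · simp only [id_eq]
    rw [if_neg h1, if_neg (Ne.symm h1)]
    simp

end Single

section Comm

variable {n : ℕ} {q : ℝ} {lam : ℂ}

theorem comm_AA (hq0 : 0 < q) (hq1 : q < 1) {i j : Fin n} (hij : j < i) :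
    YA q hq0 hq1 i * YA q hq0 hq1 j
      = ((q : ℂ))⁻¹ • (YA q hq0 hq1 j * YA q hq0 hq1 i) := by
  have hji : j ≠ i := ne_of_lt hij
  have hij' : i ≠ j := hji.symm
  refine ext_of_basis fun k => ?_
  simp only [ContinuousLinearMap.mul_apply, ContinuousLinearMap.smul_apply]
  rw [YA_single hq0 hq1 j k, map_smul, YA_single hq0 hq1 i,
    YA_single hq0 hq1 i k, map_smul, YA_single hq0 hq1 j, smul_smul, smul_smul, smul_smul]
  have h1 : Function.update k j (k j - 1) i = k i := Function.update_of_ne hij' _ _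
  have h2 : Function.update k i (k i - 1) j = k j := Function.update_of_ne hji _ _
  have h3 : ∑ l ∈ Finset.Iio j, Function.update k i (k i - 1) l
      = ∑ l ∈ Finset.Iio j, k l := sum_Iio_update_of_not_lt (lt_asymm hij) k _
  rw [h1, h2, h3, Function.update_comm hji (k j - 1) (k i - 1) k]
  by_cases hkj : k j = 0
  · simp [hkj]
  · congr 1
    have h4 : ((q : ℂ)) ^ (∑ l ∈ Finset.Iio i, k l)
        = ((q : ℂ)) ^ (∑ l ∈ Finset.Iio i, Function.update k j (k j - 1) l) * (q : ℂ) := by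
      rw [← pow_succ]
      congr 1
      have := sum_Iio_update_of_lt hij k (k j - 1)
      omega
    have hq : (q : ℂ) ≠ 0 := by simpa using hq0.ne'
    push_cast
    rw [h4]
    field_simp

theorem comm_ZA (hq0 : 0 < q) (hq1 : q < 1) {i j : Fin n} (hij : j < i) :
    ZA q hq0 hq1 i * YA q hq0 hq1 j
      = ((q : ℂ))⁻¹ • (YA q hq0 hq1 j * ZA q hq0 hq1 i) := by
  have hji : j ≠ i := ne_of_lt hij
  have hij' : i ≠ j := hji.symm
  refine ext_of_basis fun k => ?_
  simp only [ContinuousLinearMap.mul_apply, ContinuousLinearMap.smul_apply]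
  rw [YA_single hq0 hq1 j k, map_smul, ZA_single hq0 hq1 i,
    ZA_single hq0 hq1 i k, map_smul, YA_single hq0 hq1 j, smul_smul, smul_smul, smul_smul]
  have h1 : Function.update k j (k j - 1) i = k i := Function.update_of_ne hij' _ _
  have h2 : Function.update k i (k i + 1) j = k j := Function.update_of_ne hji _ _
  have h3 : ∑ l ∈ Finset.Iio j, Function.update k i (k i + 1) l
      = ∑ l ∈ Finset.Iio j, k l := sum_Iio_update_of_not_lt (lt_asymm hij) k _
  rw [h1, h2, h3, Function.update_comm hji (k j - 1) (k i + 1) k]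
  by_cases hkj : k j = 0
  · simp [hkj]
  · congr 1
    have h4 : ((q : ℂ)) ^ (∑ l ∈ Finset.Iio i, k l)
        = ((q : ℂ)) ^ (∑ l ∈ Finset.Iio i, Function.update k j (k j - 1) l) * (q : ℂ) := by
      rw [← pow_succ]
      congr 1
      have := sum_Iio_update_of_lt hij k (k j - 1)
      omega
    have hq : (q : ℂ) ≠ 0 := by simpa using hq0.ne'
    push_cast
    rw [h4]
    field_simp

theorem comm_DA (hq0 : 0 < q) (hq1 : q < 1) (hlam : ‖lam‖ = 1) (j : Fin n) :
    DD q lam hq0 hq1 hlam * YA q hq0 hq1 j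
      = (((q : ℂ))⁻¹ ^ cc n j) • (YA q hq0 hq1 j * DD q lam hq0 hq1 hlam) := by
  refine ext_of_basis fun k => ?_
  simp only [ContinuousLinearMap.mul_apply, ContinuousLinearMap.smul_apply]
  rw [YA_single hq0 hq1 j k, map_smul, DD_single hq0 hq1 hlam,
    DD_single hq0 hq1 hlam k, map_smul, YA_single hq0 hq1 j, smul_smul, smul_smul, smul_smul]
  by_cases hkj : k j = 0
  · simp [hkj]
  · congr 1
    have h4 : (q : ℂ) ^ Ediag k
        = (q : ℂ) ^ Ediag (Function.update k j (k j - 1)) * (q : ℂ) ^ cc n j := by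
      rw [← pow_add]
      congr 1
      have h5 := Ediag_update j k (k j - 1)
      have hc : cc n j = 1 ∨ cc n j = 2 := by unfold cc; split <;> simp
      rcases hc with hc | hc <;> rw [hc] at h5 ⊢ <;> omega
    rw [wD, wD, h4]
    have hq : (q : ℂ) ≠ 0 := by
      simpa using hq0.ne'
    field_simp
    rw [mul_assoc _ ((1 / (q : ℂ)) ^ cc n j), ← mul_pow, one_div, inv_mul_cancel₀ hq, one_pow,
      mul_one]

theorem comm_DsA (hq0 : 0 < q) (hq1 : q < 1) (hlam : ‖lam‖ = 1) (j : Fin n) :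
    DDs q lam hq0 hq1 hlam * YA q hq0 hq1 j
      = (((q : ℂ))⁻¹ ^ cc n j) • (YA q hq0 hq1 j * DDs q lam hq0 hq1 hlam) := by
  refine ext_of_basis fun k => ?_
  simp only [ContinuousLinearMap.mul_apply, ContinuousLinearMap.smul_apply]
  rw [YA_single hq0 hq1 j k, map_smul, DDs_single hq0 hq1 hlam,
    DDs_single hq0 hq1 hlam k, map_smul, YA_single hq0 hq1 j, smul_smul, smul_smul, smul_smul]
  by_cases hkj : k j = 0
  · simp [hkj]
  · congr 1
    have h4 : (q : ℂ) ^ Ediag k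
        = (q : ℂ) ^ Ediag (Function.update k j (k j - 1)) * (q : ℂ) ^ cc n j := by
      rw [← pow_add]
      congr 1
      have h5 := Ediag_update j k (k j - 1)
      have hc : cc n j = 1 ∨ cc n j = 2 := by unfold cc; split <;> simp
      rcases hc with hc | hc <;> rw [hc] at h5 ⊢ <;> omega
    rw [wDs, wDs, h4]
    have hq : (q : ℂ) ≠ 0 := by
      simpa using hq0.ne'
    field_simp
    rw [mul_assoc _ ((1 / (q : ℂ)) ^ cc n j), ← mul_pow, one_div, inv_mul_cancel₀ hq, one_pow,
      mul_one]

end Comm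

section Quad

variable {n : ℕ} {q : ℝ} {lam : ℂ}

theorem ZAYA (hq0 : 0 < q) (hq1 : q < 1) (i : Fin n) (k : Fin n → ℕ) :
    ZA q hq0 hq1 i (YA q hq0 hq1 i (basisE k))
      = ((q ^ (2 * ∑ j ∈ Finset.Iio i, k j) * (1 - q ^ (2 * cc n i * k i)) : ℝ) : ℂ)
          • basisE k := by
  rw [YA_single hq0 hq1 i k, map_smul, ZA_single hq0 hq1 i, smul_smul]
  by_cases hk : k i = 0
  · simp [hk]
  · have e1 : Function.update k i (k i - 1) i = k i - 1 := Function.update_self _ _ _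
    have e2 : ∑ l ∈ Finset.Iio i, Function.update k i (k i - 1) l
        = ∑ l ∈ Finset.Iio i, k l := sum_Iio_update_of_not_lt (lt_irrefl i) k _
    have e3 : Function.update (Function.update k i (k i - 1)) i (k i - 1 + 1) = k := by
      rw [Function.update_idem, show k i - 1 + 1 = k i from by omega,
        Function.update_eq_self]
    rw [e1, e2, e3, show k i - 1 + 1 = k i from by omega]
    congr 1
    rw [← Complex.ofReal_mul, Complex.ofReal_inj]
    have hX : 0 ≤ 1 - q ^ (2 * cc n i * k i) := one_sub_pow_nonneg hq0 hq1 _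
    calc q ^ (∑ j ∈ Finset.Iio i, k j) * Real.sqrt (1 - q ^ (2 * cc n i * k i))
          * (q ^ (∑ j ∈ Finset.Iio i, k j) * Real.sqrt (1 - q ^ (2 * cc n i * k i)))
        = (q ^ (∑ j ∈ Finset.Iio i, k j) * q ^ (∑ j ∈ Finset.Iio i, k j))
            * (Real.sqrt (1 - q ^ (2 * cc n i * k i))
              * Real.sqrt (1 - q ^ (2 * cc n i * k i))) := by ring
    _ = q ^ (2 * ∑ j ∈ Finset.Iio i, k j) * (1 - q ^ (2 * cc n i * k i)) := by
        rw [Real.mul_self_sqrt hX]; ring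

theorem YAZA (hq0 : 0 < q) (hq1 : q < 1) (i : Fin n) (k : Fin n → ℕ) :
    YA q hq0 hq1 i (ZA q hq0 hq1 i (basisE k))
      = ((q ^ (2 * ∑ j ∈ Finset.Iio i, k j) * (1 - q ^ (2 * cc n i * (k i + 1))) : ℝ) : ℂ)
          • basisE k := by
  rw [ZA_single hq0 hq1 i k, map_smul, YA_single hq0 hq1 i, smul_smul]
  have e1 : Function.update k i (k i + 1) i = k i + 1 := Function.update_self _ _ _
  have e2 : ∑ l ∈ Finset.Iio i, Function.update k i (k i + 1) l
      = ∑ l ∈ Finset.Iio i, k l := sum_Iio_update_of_not_lt (lt_irrefl i) k _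
  have e3 : Function.update (Function.update k i (k i + 1)) i (k i + 1 - 1) = k := by
    rw [Function.update_idem, show k i + 1 - 1 = k i from by omega,
      Function.update_eq_self]
  rw [e1, e2, e3]
  congr 1
  rw [← Complex.ofReal_mul, Complex.ofReal_inj]
  have hX : 0 ≤ 1 - q ^ (2 * cc n i * (k i + 1)) := one_sub_pow_nonneg hq0 hq1 _
  calc q ^ (∑ j ∈ Finset.Iio i, k j) * Real.sqrt (1 - q ^ (2 * cc n i * (k i + 1)))
        * (q ^ (∑ j ∈ Finset.Iio i, k j) * Real.sqrt (1 - q ^ (2 * cc n i * (k i + 1))))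
      = (q ^ (∑ j ∈ Finset.Iio i, k j) * q ^ (∑ j ∈ Finset.Iio i, k j))
          * (Real.sqrt (1 - q ^ (2 * cc n i * (k i + 1)))
            * Real.sqrt (1 - q ^ (2 * cc n i * (k i + 1)))) := by ring
  _ = _ := by rw [Real.mul_self_sqrt hX]; ring

theorem conj_lam_mul (hlam : ‖lam‖ = 1) : (starRingEnd ℂ) lam * lam = 1 := by
  rw [mul_comm, Complex.mul_conj, Complex.normSq_eq_norm_sq, hlam]
  norm_num

theorem DsDD (hq0 : 0 < q) (hq1 : q < 1) (hlam : ‖lam‖ = 1) (k : Fin n → ℕ) :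
    DDs q lam hq0 hq1 hlam (DD q lam hq0 hq1 hlam (basisE k))
      = ((q ^ (2 * Ediag k) : ℝ) : ℂ) • basisE k := by
  rw [DD_single hq0 hq1 hlam k, map_smul, DDs_single hq0 hq1 hlam, smul_smul]
  congr 1
  rw [wDs, wD]
  have h := conj_lam_mul hlam
  push_cast
  rw [two_mul, pow_add]
  calc lam * (q : ℂ) ^ Ediag k * ((starRingEnd ℂ) lam * (q : ℂ) ^ Ediag k)
      = ((starRingEnd ℂ) lam * lam) * ((q : ℂ) ^ Ediag k * (q : ℂ) ^ Ediag k) := by ring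
  _ = _ := by rw [h, one_mul]

theorem DDDs (hq0 : 0 < q) (hq1 : q < 1) (hlam : ‖lam‖ = 1) (k : Fin n → ℕ) :
    DD q lam hq0 hq1 hlam (DDs q lam hq0 hq1 hlam (basisE k))
      = ((q ^ (2 * Ediag k) : ℝ) : ℂ) • basisE k := by
  rw [DDs_single hq0 hq1 hlam k, map_smul, DD_single hq0 hq1 hlam, smul_smul]
  congr 1
  rw [wDs, wD]
  have h := conj_lam_mul hlam
  push_cast
  rw [two_mul, pow_add]
  calc (starRingEnd ℂ) lam * (q : ℂ) ^ Ediag k * (lam * (q : ℂ) ^ Ediag k)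
      = ((starRingEnd ℂ) lam * lam) * ((q : ℂ) ^ Ediag k * (q : ℂ) ^ Ediag k) := by ring
  _ = _ := by rw [h, one_mul]

end Quad

section Telescope

variable {n : ℕ} {q : ℝ}

/-- partial products `g_t = q^(2 Σ_{l < t} c_l k_l)` -/
def gpow (q : ℝ) (n : ℕ) (k : Fin n → ℕ) (t : ℕ) : ℝ :=
  q ^ (2 * ∑ l ∈ Finset.univ.filter (fun l : Fin n => (l : ℕ) < t), cc n l * k l)

theorem gpow_zero (k : Fin n → ℕ) : gpow q n k 0 = 1 := by
  unfold gpow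
  rw [Finset.filter_false_of_mem (fun l _ => by omega)]
  simp

theorem gpow_n (k : Fin n → ℕ) : gpow q n k n = q ^ (2 * Ediag k) := by
  unfold gpow Ediag
  rw [Finset.filter_true_of_mem (fun l _ => l.isLt)]

theorem filter_succ_eq {t : ℕ} (ht : t < n) :
    Finset.univ.filter (fun l : Fin n => (l : ℕ) < t + 1)
      = insert (⟨t, ht⟩ : Fin n) (Finset.univ.filter (fun l : Fin n => (l : ℕ) < t)) := by
  ext l
  simp only [Finset.mem_filter, Finset.mem_univ, true_and, Finset.mem_insert]
  constructor
  · intro h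
    by_cases hl : (l : ℕ) = t
    · exact Or.inl (Fin.ext hl)
    · exact Or.inr (by omega)
  · rintro (rfl | h)
    · simp
    · omega

theorem filter_cc_sum_eq {t : ℕ} (ht : t < n) (k : Fin n → ℕ) :
    ∑ l ∈ Finset.univ.filter (fun l : Fin n => (l : ℕ) < t), cc n l * k l
      = ∑ l ∈ Finset.Iio (⟨t, ht⟩ : Fin n), k l := by
  have hset : Finset.Iio (⟨t, ht⟩ : Fin n)
      = Finset.univ.filter (fun l : Fin n => (l : ℕ) < t) := by
    ext l
    simp [Finset.mem_Iio, Fin.lt_def]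
  rw [hset]
  refine Finset.sum_congr rfl fun l hl => ?_
  have hlt : (l : ℕ) < t := by simpa using hl
  have : cc n l = 1 := by
    unfold cc
    rw [if_neg (by omega)]
  rw [this, one_mul]

theorem gpow_succ {t : ℕ} (ht : t < n) (k : Fin n → ℕ) :
    gpow q n k (t + 1)
      = q ^ (2 * (cc n (⟨t, ht⟩ : Fin n) * k ⟨t, ht⟩ + ∑ l ∈ Finset.Iio (⟨t, ht⟩ : Fin n), k l)) := by
  unfold gpow
  rw [filter_succ_eq ht, Finset.sum_insert (by simp), filter_cc_sum_eq ht]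

theorem gpow_eq_Iio {t : ℕ} (ht : t < n) (k : Fin n → ℕ) :
    gpow q n k t = q ^ (2 * ∑ l ∈ Finset.Iio (⟨t, ht⟩ : Fin n), k l) := by
  unfold gpow
  rw [filter_cc_sum_eq ht]

theorem coeff_step (hq0 : 0 < q) {t : ℕ} (ht : t < n) (k : Fin n → ℕ) :
    q ^ (2 * ∑ l ∈ Finset.Iio (⟨t, ht⟩ : Fin n), k l)
        * (1 - q ^ (2 * cc n (⟨t, ht⟩ : Fin n) * k ⟨t, ht⟩))
      = gpow q n k t - gpow q n k (t + 1) := by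
  rw [gpow_eq_Iio ht, gpow_succ ht]
  rw [show 2 * (cc n (⟨t, ht⟩ : Fin n) * k ⟨t, ht⟩ + ∑ l ∈ Finset.Iio (⟨t, ht⟩ : Fin n), k l)
      = 2 * cc n (⟨t, ht⟩ : Fin n) * k ⟨t, ht⟩ + 2 * ∑ l ∈ Finset.Iio (⟨t, ht⟩ : Fin n), k l
      from by ring, pow_add]
  ring

/-- the coefficient of `adjoint (Y j) * Y j` on `e_k` -/
def coeffQ (q : ℝ) (j : Fin (n + 1)) (k : Fin n → ℕ) : ℝ :=
  if h : (j : ℕ) < n then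
    q ^ (2 * ∑ l ∈ Finset.Iio (⟨(j : ℕ), h⟩ : Fin n), k l)
      * (1 - q ^ (2 * cc n ⟨(j : ℕ), h⟩ * k ⟨(j : ℕ), h⟩))
  else q ^ (2 * Ediag k)

theorem sum_coeffQ (hq0 : 0 < q) (k : Fin n → ℕ) (t : ℕ) (ht : t ≤ n) :
    ∑ j ∈ Finset.univ.filter (fun j : Fin (n + 1) => t ≤ (j : ℕ)), coeffQ q j k
      = gpow q n k t := by
  classical
  obtain ⟨d, hd⟩ : ∃ d, n - t = d := ⟨_, rfl⟩
  induction d generalizing t with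
  | zero =>
    have htn : t = n := by omega
    rw [htn]
    have hset : Finset.univ.filter (fun j : Fin (n + 1) => n ≤ (j : ℕ))
        = {Fin.last n} := by
      ext j
      simp only [Finset.mem_filter, Finset.mem_univ, true_and, Finset.mem_singleton]
      constructor
      · intro h
        have hj := j.isLt
        exact Fin.ext (by rw [Fin.val_last]; omega)
      · rintro rfl
        simp [Fin.last]
    rw [hset, Finset.sum_singleton, coeffQ, dif_neg (by simp [Fin.last]), gpow_n]
  | succ d ih =>
    have htn : t < n := by omega
    have hsplit : Finset.univ.filter (fun j : Fin (n + 1) => t ≤ (j : ℕ))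
        = insert (⟨t, by omega⟩ : Fin (n + 1))
            (Finset.univ.filter (fun j : Fin (n + 1) => t + 1 ≤ (j : ℕ))) := by
      ext j
      simp only [Finset.mem_filter, Finset.mem_univ, true_and, Finset.mem_insert]
      constructor
      · intro h
        by_cases hj : (j : ℕ) = t
        · exact Or.inl (Fin.ext hj)
        · exact Or.inr (by omega)
      · rintro (rfl | h)
        · simp
        · omega
    rw [hsplit, Finset.sum_insert (by simp), ih (t + 1) (by omega) (by omega)]
    rw [coeffQ, dif_pos htn, coeff_step hq0 htn]
    ring

end Telescope

section Master

variable {n : ℕ} {q : ℝ} {lam : ℂ}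

def Yop (q : ℝ) (lam : ℂ) (hq0 : 0 < q) (hq1 : q < 1) (hlam : ‖lam‖ = 1) (n : ℕ) :
    Fin (n + 1) → lpH n →L[ℂ] lpH n := fun i =>
  if h : (i : ℕ) < n then YA q hq0 hq1 ⟨(i : ℕ), h⟩ else DD q lam hq0 hq1 hlam

def Zop (q : ℝ) (lam : ℂ) (hq0 : 0 < q) (hq1 : q < 1) (hlam : ‖lam‖ = 1) (n : ℕ) :
    Fin (n + 1) → lpH n →L[ℂ] lpH n := fun i =>
  if h : (i : ℕ) < n then ZA q hq0 hq1 ⟨(i : ℕ), h⟩ else DDs q lam hq0 hq1 hlam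

theorem Yop_lt (hq0 : 0 < q) (hq1 : q < 1) (hlam : ‖lam‖ = 1) {i : Fin (n + 1)}
    (h : (i : ℕ) < n) : Yop q lam hq0 hq1 hlam n i = YA q hq0 hq1 ⟨(i : ℕ), h⟩ :=
  dif_pos h

theorem Yop_ge (hq0 : 0 < q) (hq1 : q < 1) (hlam : ‖lam‖ = 1) {i : Fin (n + 1)}
    (h : ¬ (i : ℕ) < n) : Yop q lam hq0 hq1 hlam n i = DD q lam hq0 hq1 hlam :=
  dif_neg h

theorem Zop_lt (hq0 : 0 < q) (hq1 : q < 1) (hlam : ‖lam‖ = 1) {i : Fin (n + 1)}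
    (h : (i : ℕ) < n) : Zop q lam hq0 hq1 hlam n i = ZA q hq0 hq1 ⟨(i : ℕ), h⟩ :=
  dif_pos h

theorem Zop_ge (hq0 : 0 < q) (hq1 : q < 1) (hlam : ‖lam‖ = 1) {i : Fin (n + 1)}
    (h : ¬ (i : ℕ) < n) : Zop q lam hq0 hq1 hlam n i = DDs q lam hq0 hq1 hlam :=
  dif_neg h

theorem adjoint_Yop (hq0 : 0 < q) (hq1 : q < 1) (hlam : ‖lam‖ = 1) (i : Fin (n + 1)) :
    adjoint (Yop q lam hq0 hq1 hlam n i) = Zop q lam hq0 hq1 hlam n i := by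
  by_cases h : (i : ℕ) < n
  · rw [Yop_lt hq0 hq1 hlam h, Zop_lt hq0 hq1 hlam h, adjoint_YA]
  · rw [Yop_ge hq0 hq1 hlam h, Zop_ge hq0 hq1 hlam h, adjoint_DD]

theorem adjYY_apply (hq0 : 0 < q) (hq1 : q < 1) (hlam : ‖lam‖ = 1) (i : Fin (n + 1))
    (k : Fin n → ℕ) :
    (adjoint (Yop q lam hq0 hq1 hlam n i) * Yop q lam hq0 hq1 hlam n i) (basisE k)
      = ((coeffQ q i k : ℝ) : ℂ) • basisE k := by
  rw [ContinuousLinearMap.mul_apply, adjoint_Yop hq0 hq1 hlam i]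
  unfold coeffQ
  by_cases h : (i : ℕ) < n
  · rw [Yop_lt hq0 hq1 hlam h, Zop_lt hq0 hq1 hlam h, dif_pos h, ZAYA]
  · rw [Yop_ge hq0 hq1 hlam h, Zop_ge hq0 hq1 hlam h, dif_neg h, DsDD]

end Master

end PiRepAux

/-- Proposition 2 of the paper: for every `0 < q < 1`, `n ≥ 1` and `λ ∈ U(1)` there
exist bounded operators on `ℓ²(ℕⁿ)` acting on the canonical basis by the formulas
of `π_λ`, and they form a `Σ_q`-family. -/
theorem exists_piRep (q : ℝ) (hq0 : 0 < q) (hq1 : q < 1) (n : ℕ) (hn : 1 ≤ n)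
    (lam : ℂ) (hlam : ‖lam‖ = 1) :
    ∃ Y : Fin (n + 1) → lpH n →L[ℂ] lpH n, IsPiRep q lam Y ∧ IsSigmaQFamily q Y := by
  classical
  refine ⟨PiRepAux.Yop q lam hq0 hq1 hlam n, ⟨?_, ?_, ?_⟩, ?_, ?_, ?_, ?_, ?_⟩
  · -- π formula for Y_i, i + 1 < n
    intro i hi k
    have hlt : ((i.castSucc : Fin (n + 1)) : ℕ) < n := by
      simpa using i.isLt
    rw [PiRepAux.Yop_lt hq0 hq1 hlam hlt,
      show (⟨((i.castSucc : Fin (n + 1)) : ℕ), hlt⟩ : Fin n) = i from Fin.ext (by simp),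
      PiRepAux.YA_single hq0 hq1 i k,
      show 2 * PiRepAux.cc n i * k i = 2 * k i from by
        unfold PiRepAux.cc; rw [if_neg (by omega)]]
  · -- π formula for Y_n
    intro i hi k
    have hlt : ((i.castSucc : Fin (n + 1)) : ℕ) < n := by
      simpa using i.isLt
    rw [PiRepAux.Yop_lt hq0 hq1 hlam hlt,
      show (⟨((i.castSucc : Fin (n + 1)) : ℕ), hlt⟩ : Fin n) = i from Fin.ext (by simp),
      PiRepAux.YA_single hq0 hq1 i k,
      show 2 * PiRepAux.cc n i * k i = 4 * k i from by
        unfold PiRepAux.cc; rw [if_pos (by exact hi)]]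
  · -- π formula for Y_{n+1}
    intro k
    rw [PiRepAux.Yop_ge hq0 hq1 hlam (by rw [Fin.val_last]; exact lt_irrefl n),
      PiRepAux.DD_single hq0 hq1 hlam k, PiRepAux.wD,
      show PiRepAux.Ediag k = ∑ j : Fin n, if (j : ℕ) + 1 = n then 2 * k j else k j from
        Finset.sum_congr rfl fun j _ => by unfold PiRepAux.cc; split <;> ring]
  · -- R1
    intro i j hlt hnot
    have hij : (j : ℕ) < (i : ℕ) := hlt
    by_cases hi : (i : ℕ) < n
    · have hj : (j : ℕ) < n := by omega
      have hlt' : (⟨(j : ℕ), hj⟩ : Fin n) < ⟨(i : ℕ), hi⟩ := hij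
      constructor
      · rw [PiRepAux.Yop_lt hq0 hq1 hlam hi, PiRepAux.Yop_lt hq0 hq1 hlam hj]
        exact PiRepAux.comm_AA hq0 hq1 hlt'
      · rw [PiRepAux.Yop_lt hq0 hq1 hlam hi, PiRepAux.Yop_lt hq0 hq1 hlam hj,
          PiRepAux.adjoint_YA]
        exact PiRepAux.comm_ZA hq0 hq1 hlt'
    · have hi' : (i : ℕ) = n := by have := i.isLt; omega
      have hj : (j : ℕ) < n := by omega
      have hj1 : (j : ℕ) + 1 ≠ n := fun h => hnot ⟨hi', h⟩
      have hcc : PiRepAux.cc n ⟨(j : ℕ), hj⟩ = 1 := if_neg hj1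
      constructor
      · rw [PiRepAux.Yop_ge hq0 hq1 hlam hi, PiRepAux.Yop_lt hq0 hq1 hlam hj]
        have := PiRepAux.comm_DA hq0 hq1 hlam (⟨(j : ℕ), hj⟩ : Fin n)
        rwa [hcc, pow_one] at this
      · rw [PiRepAux.Yop_ge hq0 hq1 hlam hi, PiRepAux.Yop_lt hq0 hq1 hlam hj,
          PiRepAux.adjoint_DD]
        have := PiRepAux.comm_DsA hq0 hq1 hlam (⟨(j : ℕ), hj⟩ : Fin n)
        rwa [hcc, pow_one] at this
  · -- R2
    intro j hj
    have hjn : (j : ℕ) < n := by omega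
    have hcc : PiRepAux.cc n ⟨(j : ℕ), hjn⟩ = 2 := if_pos hj
    have hlast : ¬ ((Fin.last n : Fin (n + 1)) : ℕ) < n := by
      rw [Fin.val_last]; exact lt_irrefl n
    constructor
    · rw [PiRepAux.Yop_ge hq0 hq1 hlam hlast, PiRepAux.Yop_lt hq0 hq1 hlam hjn]
      have := PiRepAux.comm_DA hq0 hq1 hlam (⟨(j : ℕ), hjn⟩ : Fin n)
      rwa [hcc] at this
    · rw [PiRepAux.Yop_ge hq0 hq1 hlam hlast, PiRepAux.Yop_lt hq0 hq1 hlam hjn,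
        PiRepAux.adjoint_DD]
      have := PiRepAux.comm_DsA hq0 hq1 hlam (⟨(j : ℕ), hjn⟩ : Fin n)
      rwa [hcc] at this
  · -- R3
    intro i hi
    by_cases hilt : (i : ℕ) < n
    · have hcc : PiRepAux.cc n ⟨(i : ℕ), hilt⟩ = 1 := if_neg hi
      have hIoi : Finset.Ioi i
          = Finset.univ.filter (fun j : Fin (n + 1) => (i : ℕ) + 1 ≤ (j : ℕ)) := by
        ext j
        simp only [Finset.mem_Ioi, Finset.mem_filter, Finset.mem_univ, true_and]
        rw [Fin.lt_def]
        omega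
      refine PiRepAux.ext_of_basis fun k => ?_
      rw [ContinuousLinearMap.sub_apply, ContinuousLinearMap.mul_apply,
        ContinuousLinearMap.mul_apply, PiRepAux.Yop_lt hq0 hq1 hlam hilt,
        PiRepAux.adjoint_YA, PiRepAux.YAZA hq0 hq1, PiRepAux.ZAYA hq0 hq1,
        ContinuousLinearMap.smul_apply, ContinuousLinearMap.sum_apply,
        Finset.sum_congr rfl (fun j _ => PiRepAux.adjYY_apply hq0 hq1 hlam j k),
        ← Finset.sum_smul, smul_smul, ← sub_smul]
      congr 1
      rw [show ∑ j ∈ Finset.Ioi i, ((PiRepAux.coeffQ q j k : ℝ) : ℂ)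
          = ((∑ j ∈ Finset.Ioi i, PiRepAux.coeffQ q j k : ℝ) : ℂ) from by push_cast; rfl,
        hIoi, PiRepAux.sum_coeffQ hq0 k ((i : ℕ) + 1) (by omega),
        PiRepAux.gpow_succ hilt, hcc]
      rw [show ((1 - q ^ 2 : ℝ) : ℂ) * ((q ^ (2 * (1 * k ⟨(i : ℕ), hilt⟩
            + ∑ l ∈ Finset.Iio (⟨(i : ℕ), hilt⟩ : Fin n), k l)) : ℝ) : ℂ)
          = (((1 - q ^ 2) * q ^ (2 * (1 * k ⟨(i : ℕ), hilt⟩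
            + ∑ l ∈ Finset.Iio (⟨(i : ℕ), hilt⟩ : Fin n), k l)) : ℝ) : ℂ) from by push_cast; rfl,
        ← Complex.ofReal_sub, Complex.ofReal_inj]
      set K := k (⟨(i : ℕ), hilt⟩ : Fin n)
      set S := ∑ l ∈ Finset.Iio (⟨(i : ℕ), hilt⟩ : Fin n), k l
      rw [show 2 * 1 * (K + 1) = 2 * K + 2 from by ring, show 2 * 1 * K = 2 * K from by ring,
        show 2 * (1 * K + S) = 2 * K + 2 * S from by ring, pow_add, pow_add]
      ring
    · have hieq : i = Fin.last n := Fin.ext (by have := i.isLt; rw [Fin.val_last]; omega)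
      subst hieq
      have hIoi : Finset.Ioi (Fin.last n) = (∅ : Finset (Fin (n + 1))) := by
        ext j
        simp only [Finset.mem_Ioi, Finset.notMem_empty, iff_false]
        exact fun h => absurd h (not_lt.mpr (Fin.le_last j))
      rw [hIoi, Finset.sum_empty, smul_zero, sub_eq_zero,
        PiRepAux.Yop_ge hq0 hq1 hlam hilt, PiRepAux.adjoint_DD]
      exact PiRepAux.ext_of_basis fun k => by
        rw [ContinuousLinearMap.mul_apply, ContinuousLinearMap.mul_apply,
          PiRepAux.DDDs hq0 hq1 hlam k, PiRepAux.DsDD hq0 hq1 hlam k]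
  · -- R4
    intro i hi
    have hilt : (i : ℕ) < n := by omega
    have hcc : PiRepAux.cc n ⟨(i : ℕ), hilt⟩ = 2 := if_pos hi
    have hlast : ¬ ((Fin.last n : Fin (n + 1)) : ℕ) < n := by
      rw [Fin.val_last]; exact lt_irrefl n
    refine PiRepAux.ext_of_basis fun k => ?_
    rw [ContinuousLinearMap.sub_apply, ContinuousLinearMap.mul_apply,
      ContinuousLinearMap.mul_apply, ContinuousLinearMap.smul_apply,
      ContinuousLinearMap.mul_apply,
      PiRepAux.Yop_lt hq0 hq1 hlam hilt, PiRepAux.adjoint_YA,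
      PiRepAux.Yop_ge hq0 hq1 hlam hlast, PiRepAux.adjoint_DD,
      PiRepAux.YAZA hq0 hq1, PiRepAux.ZAYA hq0 hq1, PiRepAux.DsDD hq0 hq1 hlam k,
      smul_smul, ← sub_smul]
    congr 1
    have hE : PiRepAux.Ediag k = PiRepAux.cc n ⟨(i : ℕ), hilt⟩ * k ⟨(i : ℕ), hilt⟩
        + ∑ l ∈ Finset.Iio (⟨(i : ℕ), hilt⟩ : Fin n), k l := by
      calc PiRepAux.Ediag k
          = ∑ l ∈ Finset.univ.filter (fun l : Fin n => (l : ℕ) < n),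
              PiRepAux.cc n l * k l := by
            unfold PiRepAux.Ediag
            rw [Finset.filter_true_of_mem (fun l _ => l.isLt)]
      _ = ∑ l ∈ Finset.univ.filter (fun l : Fin n => (l : ℕ) < (i : ℕ) + 1),
              PiRepAux.cc n l * k l := by rw [hi]
      _ = _ := by
            rw [PiRepAux.filter_succ_eq hilt, Finset.sum_insert (by simp),
              PiRepAux.filter_cc_sum_eq hilt]
    rw [show ((1 - q ^ 4 : ℝ) : ℂ) * ((q ^ (2 * PiRepAux.Ediag k) : ℝ) : ℂ)
        = (((1 - q ^ 4) * q ^ (2 * PiRepAux.Ediag k) : ℝ) : ℂ) from by push_cast; rfl,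
      ← Complex.ofReal_sub, Complex.ofReal_inj, hE, hcc]
    set K := k (⟨(i : ℕ), hilt⟩ : Fin n)
    set S := ∑ l ∈ Finset.Iio (⟨(i : ℕ), hilt⟩ : Fin n), k l
    rw [show 2 * 2 * (K + 1) = 4 * K + 4 from by ring, show 2 * 2 * K = 4 * K from by ring,
      show 2 * (2 * K + S) = 4 * K + 2 * S from by ring, pow_add, pow_add]
    ring
  · -- R5
    refine PiRepAux.ext_of_basis fun k => ?_
    rw [ContinuousLinearMap.sum_apply,
      Finset.sum_congr rfl (fun j _ => PiRepAux.adjYY_apply hq0 hq1 hlam j k),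
      ← Finset.sum_smul, ContinuousLinearMap.one_apply,
      show ∑ j : Fin (n + 1), ((PiRepAux.coeffQ q j k : ℝ) : ℂ)
        = ((∑ j : Fin (n + 1), PiRepAux.coeffQ q j k : ℝ) : ℂ) from by push_cast; rfl,
      show (Finset.univ : Finset (Fin (n + 1)))
        = Finset.univ.filter (fun j : Fin (n + 1) => 0 ≤ (j : ℕ)) from
        (Finset.filter_true_of_mem (fun j _ => Nat.zero_le _)).symm,
      PiRepAux.sum_coeffQ hq0 k 0 (Nat.zero_le n), PiRepAux.gpow_zero]
    simp
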